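/- Let a reaction network N be given by α, β ∈ ℕ^{n×ν} with Γ = β − α, admissible Jacobian set 𝒦, and r = rank Γ. Assume N has no catalytic reactions (for all i, j, not both α_{ij} > 0 and β_{ij} > 0). Fix a reaction j and let Ñ be obtained from N by adding an intermediate species to reaction j: Ñ has n+1 species and ν+1 reactions with α̃, β̃ ∈ ℕ^{(n+1)×(ν+1)} defined by: column j of α̃ is column j of α extended by 0 in row n+1, and column j of β̃ is the vector with 1 in row n+1 and 0 elsewhere; column ν+1 of α̃ is the vector with 1 in row n+1 and 0 elsewhere, and column ν+1 of β̃ is column j of β extended by 0 in row n+1; every other column of α̃ (resp. β̃) equals the corresponding column of α (resp. β) extended by 0 in row n+1. Set Γ̃ = β̃ − α̃, r̃ = rank Γ̃, and let 𝒦̃ be the admissible Jacobian set of Ñ. Assume: N is robustly P0; N is robustly non-degenerate; and Ñ is robustly P0. Then Ñ is robustly non-degenerate: for every Ṽ ∈ 𝒦̃ the sum of all r̃×r̃ principal minors of −Γ̃Ṽ is nonzero. -/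

import Mathlib

open Matrix Finset

/-- The principal minor of a square matrix `M` indexed by the set `I`. -/
noncomputable def principalMinor {n : ℕ} (M : Matrix (Fin n) (Fin n) ℝ) (I : Finset (Fin n)) : ℝ :=
  (M.submatrix (fun i : {x // x ∈ I} => (i : Fin n)) (fun i : {x // x ∈ I} => (i : Fin n))).det

/-- The sum of all `r × r` principal minors of the square matrix `M`. -/
noncomputable def sumMinors {n : ℕ} (r : ℕ) (M : Matrix (Fin n) (Fin n) ℝ) : ℝ :=
  ∑ I ∈ Finset.univ.powersetCard r, principalMinor M I

/-- The admissible Jacobian set: `V j i > 0` whenever `X i` is a reactant of reaction `j`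
    (i.e. `α i j > 0`) and `V j i = 0` otherwise. -/
def admissible {n ν : ℕ} (α : Matrix (Fin n) (Fin ν) ℕ) (V : Matrix (Fin ν) (Fin n) ℝ) : Prop :=
  ∀ i j, (0 < α i j → 0 < V j i) ∧ (α i j = 0 → V j i = 0)

/-- The stoichiometry matrix `Γ = β - α` (entries cast to `ℝ`). -/
def gam {n ν : ℕ} (α β : Matrix (Fin n) (Fin ν) ℕ) : Matrix (Fin n) (Fin ν) ℝ :=
  fun i j => (β i j : ℝ) - (α i j : ℝ)

lemma rank_submatrix_left_le {m k p : Type*} [Fintype m] [Fintype k] [Fintype p]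
    (A : Matrix m p ℝ) (f : k → m) :
    (A.submatrix f id).rank ≤ A.rank := by
  rw [Matrix.rank_eq_finrank_span_cols, Matrix.rank_eq_finrank_span_cols]
  have h : Set.range (A.submatrix f id).col = (LinearMap.funLeft ℝ ℝ f) '' Set.range A.col := by
    rw [← Set.range_comp]; rfl
  rw [h, ← Submodule.map_span]
  exact Submodule.finrank_map_le _ _

lemma rank_submatrix_right_le {m k p : Type*} [Fintype m] [Fintype k] [Fintype p]
    (A : Matrix m p ℝ) (g : k → p) :
    (A.submatrix id g).rank ≤ A.rank := by
  rw [Matrix.rank_eq_finrank_span_cols, Matrix.rank_eq_finrank_span_cols]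
  have h : Set.range (A.submatrix id g)ᵀ ⊆ Set.range Aᵀ := by
    rintro x ⟨jj, rfl⟩; exact ⟨g jj, rfl⟩
  exact Submodule.finrank_mono (Submodule.span_mono h)

lemma card_le_rank_of_minor_ne {m : ℕ} (M : Matrix (Fin m) (Fin m) ℝ) (S : Finset (Fin m))
    (h : principalMinor M S ≠ 0) : S.card ≤ M.rank := by
  classical
  set ι : {x // x ∈ S} → Fin m := fun i => (i : Fin m) with hι
  have hu : IsUnit (M.submatrix ι ι) :=
    (Matrix.isUnit_iff_isUnit_det _).2 (isUnit_iff_ne_zero.2 h)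
  have h1 := Matrix.rank_of_isUnit _ hu
  rw [Fintype.card_coe] at h1
  have h2 : M.submatrix ι ι = (M.submatrix id ι).submatrix ι id := rfl
  calc S.card = (M.submatrix ι ι).rank := h1.symm
    _ ≤ (M.submatrix id ι).rank := by rw [h2]; exact rank_submatrix_left_le _ _
    _ ≤ M.rank := rank_submatrix_right_le _ _

/-- Extend a vector by a zero last coordinate, as a linear map. -/
noncomputable def extL (n : ℕ) : (Fin n → ℝ) →ₗ[ℝ] (Fin (n + 1) → ℝ) where
  toFun x := Fin.snoc x 0
  map_add' x y := by
    ext i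
    induction i using Fin.lastCases <;> simp
  map_smul' c x := by
    ext i
    induction i using Fin.lastCases <;> simp

lemma extL_injective (n : ℕ) : Function.Injective (extL n) := by
  intro x y h
  funext i
  have := congrFun h i.castSucc
  simpa [extL] using this

lemma rank_tilde_le {n ν : ℕ} (G : Matrix (Fin n) (Fin ν) ℝ)
    (Gt : Matrix (Fin (n + 1)) (Fin (ν + 1)) ℝ) (w : Fin (n + 1) → ℝ) (hw : w ≠ 0)
    (hcol : ∀ k : Fin (ν + 1), ∃ c : ℝ,
      (fun i => Gt i k) - c • w ∈ Submodule.map (extL n) (Submodule.span ℝ (Set.range Gᵀ))) :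
    Gt.rank ≤ G.rank + 1 := by
  classical
  set U := Submodule.map (extL n) (Submodule.span ℝ (Set.range Gᵀ)) with hU
  have hle : Submodule.span ℝ (Set.range Gtᵀ) ≤ U ⊔ Submodule.span ℝ {w} := by
    rw [Submodule.span_le]
    rintro x ⟨k, rfl⟩
    obtain ⟨c, hc⟩ := hcol k
    have hx : Gtᵀ k = ((fun i => Gt i k) - c • w) + c • w := by
      ext i; simp [Matrix.transpose]
    rw [hx]
    exact Submodule.add_mem_sup hc (Submodule.smul_mem _ _ (Submodule.mem_span_singleton_self w))
  have hUrank : Module.finrank ℝ U = G.rank := by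
    rw [Matrix.rank_eq_finrank_span_cols]
    exact (LinearEquiv.finrank_eq
      (Submodule.equivMapOfInjective (extL n) (extL_injective n) _)).symm
  calc Gt.rank = Module.finrank ℝ (Submodule.span ℝ (Set.range Gtᵀ)) :=
        Matrix.rank_eq_finrank_span_cols _
    _ ≤ Module.finrank ℝ ((U ⊔ Submodule.span ℝ {w} : Submodule ℝ (Fin (n+1) → ℝ))) :=
        Submodule.finrank_mono hle
    _ ≤ Module.finrank ℝ U + Module.finrank ℝ (Submodule.span ℝ {w}) :=
        Submodule.finrank_add_le_finrank_add_finrank _ _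
    _ = G.rank + 1 := by rw [hUrank, finrank_span_singleton hw]

lemma minor_insert_last {n : ℕ} (Mt : Matrix (Fin (n + 1)) (Fin (n + 1)) ℝ)
    (P : Matrix (Fin n) (Fin n) ℝ) (c : Fin n → ℝ) (v : ℝ)
    (hcorner : Mt (Fin.last n) (Fin.last n) = v)
    (hcol : ∀ i : Fin n, Mt i.castSucc (Fin.last n) = c i * v)
    (hmain : ∀ i i' : Fin n,
      Mt i.castSucc i'.castSucc = P i i' + c i * Mt (Fin.last n) i'.castSucc)
    (I : Finset (Fin n)) :
    principalMinor Mt (insert (Fin.last n) (I.map Fin.castSuccEmb))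
      = v * principalMinor P I := by
  classical
  set S : Finset (Fin (n + 1)) := insert (Fin.last n) (I.map Fin.castSuccEmb) with hS
  have hlastS : Fin.last n ∈ S := Finset.mem_insert_self _ _
  set k₀ : {x // x ∈ S} := ⟨Fin.last n, hlastS⟩ with hk₀
  set N : Matrix (Fin (n + 1)) (Fin (n + 1)) ℝ := fun a b =>
    if hb : b = Fin.last n then (if a = Fin.last n then v else 0)
    else if ha : a = Fin.last n then Mt a b
    else P (a.castPred ha) (b.castPred hb) with hN
  have hrel : ∀ a b : Fin (n + 1), Mt a b = N a b +
      (if ha : a = Fin.last n then 0 else c (a.castPred ha)) * N (Fin.last n) b := by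
    intro a b
    induction a using Fin.lastCases with
    | last =>
      simp only [dif_pos rfl, zero_mul, add_zero]
      induction b using Fin.lastCases with
      | last => simp [hN, hcorner]
      | cast b => simp [hN, (Fin.castSucc_lt_last b).ne]
    | cast a =>
      have ha : a.castSucc ≠ Fin.last n := (Fin.castSucc_lt_last a).ne
      induction b using Fin.lastCases with
      | last => simp [hN, ha, hcol a]
      | cast b =>
        have hb : b.castSucc ≠ Fin.last n := (Fin.castSucc_lt_last b).ne
        simp only [hN, dif_neg ha, dif_neg hb, dif_pos rfl, Fin.castPred_castSucc]
        exact hmain a b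
  have hstep1 : principalMinor Mt S =
      (N.submatrix (fun i : {x // x ∈ S} => (i : Fin (n+1)))
        (fun i : {x // x ∈ S} => (i : Fin (n+1)))).det := by
    apply Matrix.det_eq_of_forall_row_eq_smul_add_const
      (fun a : {x // x ∈ S} =>
        if ha : (a : Fin (n+1)) = Fin.last n then 0 else c ((a : Fin (n+1)).castPred ha)) k₀
    · simp [hk₀]
    · intro a b
      exact hrel a b
  have hmem : ∀ i : {x // x ∈ I}, (i : Fin n).castSucc ∈ S := by
    intro i
    exact Finset.mem_insert_of_mem (Finset.mem_map_of_mem _ i.2)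
  set f : {x // x ∈ I} ⊕ Unit → {x // x ∈ S} :=
    Sum.elim (fun i => ⟨(i : Fin n).castSucc, hmem i⟩) (fun _ => k₀) with hf
  have hbij : Function.Bijective f := by
    constructor
    · rintro (a | a) (b | b) hab
      · simp only [hf, Sum.elim_inl, Subtype.mk.injEq] at hab
        exact congrArg Sum.inl (Subtype.ext (Fin.castSucc_injective n hab))
      · simp only [hf, Sum.elim_inl, Sum.elim_inr, hk₀, Subtype.mk.injEq] at hab
        exact absurd hab (Fin.castSucc_lt_last _).ne
      · simp only [hf, Sum.elim_inl, Sum.elim_inr, hk₀, Subtype.mk.injEq] at hab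
        exact absurd hab.symm (Fin.castSucc_lt_last _).ne
      · simp
    · rintro ⟨y, hy⟩
      rcases Finset.mem_insert.mp hy with h | h
      · exact ⟨Sum.inr (), by simp [hf, hk₀, h]⟩
      · obtain ⟨i, hi, hiy⟩ := Finset.mem_map.mp h
        refine ⟨Sum.inl ⟨i, hi⟩, ?_⟩
        apply Subtype.ext
        simpa [hf] using hiy
  set e : ({x // x ∈ I} ⊕ Unit) ≃ {x // x ∈ S} := Equiv.ofBijective f hbij with he
  have hstep2 : (N.submatrix (fun i : {x // x ∈ S} => (i : Fin (n+1)))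
        (fun i : {x // x ∈ S} => (i : Fin (n+1)))).det =
      (Matrix.fromBlocks
        (P.submatrix (fun i : {x // x ∈ I} => (i : Fin n)) (fun i : {x // x ∈ I} => (i : Fin n)))
        (0 : Matrix {x // x ∈ I} Unit ℝ)
        ((fun _ i' => N (Fin.last n) ((i' : Fin n)).castSucc) : Matrix Unit {x // x ∈ I} ℝ)
        ((fun _ _ => v) : Matrix Unit Unit ℝ)).det := by
    rw [← Matrix.det_submatrix_equiv_self e]
    congr 1
    ext (a | a) (b | b)
    · simp only [Matrix.submatrix_apply]
      simp [he, hf, hN, (Fin.castSucc_lt_last _).ne, Fin.castPred_castSucc]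
      rfl
    · simp only [Matrix.submatrix_apply]
      simp [he, hf, hk₀, hN, (Fin.castSucc_lt_last _).ne]
      rfl
    · simp only [Matrix.submatrix_apply]
      simp [he, hf, hk₀, hN, (Fin.castSucc_lt_last _).ne]
      rfl
    · simp only [Matrix.submatrix_apply]
      simp [he, hf, hk₀, hN]
      rfl
  rw [hstep1, hstep2]
  refine (Matrix.det_fromBlocks_zero₁₂ _ _ _).trans ?_
  have hD : Matrix.det ((fun _ _ => v) : Matrix Unit Unit ℝ) = v := Matrix.det_unique _
  rw [hD, mul_comm]
  rfl

/-- Robust non-degeneracy is preserved by the addition of an intermediate species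
to a reaction (for robustly `P₀` networks without catalytic reactions). -/
theorem nondeg_intermediate (n ν : ℕ) (α β : Matrix (Fin n) (Fin ν) ℕ)
    (hcat : ∀ i j, ¬(0 < α i j ∧ 0 < β i j))
    (j : Fin ν)
    (αt βt : Matrix (Fin (n + 1)) (Fin (ν + 1)) ℕ)
    (hαj : ∀ i : Fin n, αt i.castSucc j.castSucc = α i j)
    (hαjl : αt (Fin.last n) j.castSucc = 0)
    (hβj : ∀ i : Fin n, βt i.castSucc j.castSucc = 0)
    (hβjl : βt (Fin.last n) j.castSucc = 1)
    (hαnew : ∀ i : Fin n, αt i.castSucc (Fin.last ν) = 0)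
    (hαnewl : αt (Fin.last n) (Fin.last ν) = 1)
    (hβnew : ∀ i : Fin n, βt i.castSucc (Fin.last ν) = β i j)
    (hβnewl : βt (Fin.last n) (Fin.last ν) = 0)
    (hother : ∀ (i : Fin n) (k : Fin ν), k ≠ j →
      αt i.castSucc k.castSucc = α i k ∧ βt i.castSucc k.castSucc = β i k)
    (hotherl : ∀ k : Fin ν, k ≠ j →
      αt (Fin.last n) k.castSucc = 0 ∧ βt (Fin.last n) k.castSucc = 0)
    (hP0 : ∀ V, admissible α V → ∀ I : Finset (Fin n),
      0 ≤ principalMinor (-(gam α β * V)) I)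
    (hND : ∀ V, admissible α V →
      sumMinors (gam α β).rank (-(gam α β * V)) ≠ 0)
    (hP0t : ∀ V, admissible αt V → ∀ I : Finset (Fin (n + 1)),
      0 ≤ principalMinor (-(gam αt βt * V)) I) :
    ∀ V, admissible αt V →
      sumMinors (gam αt βt).rank (-(gam αt βt * V)) ≠ 0 := by
  classical
  intro Vt hVt
  set G : Matrix (Fin n) (Fin ν) ℝ := gam α β with hG
  set Gt : Matrix (Fin (n + 1)) (Fin (ν + 1)) ℝ := gam αt βt with hGt
  set Mt : Matrix (Fin (n + 1)) (Fin (n + 1)) ℝ := -(Gt * Vt) with hMt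
  set V : Matrix (Fin ν) (Fin n) ℝ := fun k i => Vt k.castSucc i.castSucc with hVdef
  set P : Matrix (Fin n) (Fin n) ℝ := -(G * V) with hP
  -- entries of Gt
  have hGt_main : ∀ (i : Fin n) (k : Fin ν), k ≠ j → Gt i.castSucc k.castSucc = G i k := by
    intro i k hk
    simp [hGt, hG, gam, (hother i k hk).1, (hother i k hk).2]
  have hGt_j : ∀ i : Fin n, Gt i.castSucc j.castSucc = -(α i j : ℝ) := by
    intro i; simp [hGt, gam, hαj i, hβj i]
  have hGt_lastcol : ∀ i : Fin n, Gt i.castSucc (Fin.last ν) = (β i j : ℝ) := by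
    intro i; simp [hGt, gam, hαnew i, hβnew i]
  have hGt_lastrow_main : ∀ k : Fin ν, k ≠ j → Gt (Fin.last n) k.castSucc = 0 := by
    intro k hk; simp [hGt, gam, (hotherl k hk).1, (hotherl k hk).2]
  have hGt_lastrow_j : Gt (Fin.last n) j.castSucc = 1 := by
    simp [hGt, gam, hαjl, hβjl]
  have hGt_corner : Gt (Fin.last n) (Fin.last ν) = -1 := by
    simp [hGt, gam, hαnewl, hβnewl]
  -- entries of Vt
  have hv : 0 < Vt (Fin.last ν) (Fin.last n) :=
    (hVt (Fin.last n) (Fin.last ν)).1 (by rw [hαnewl]; exact one_pos)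
  have hVt_lastrow : ∀ i : Fin n, Vt (Fin.last ν) i.castSucc = 0 := fun i =>
    (hVt i.castSucc (Fin.last ν)).2 (hαnew i)
  have hVt_lastcol : ∀ k : Fin ν, Vt k.castSucc (Fin.last n) = 0 := by
    intro k
    by_cases hk : k = j
    · exact (hVt _ _).2 (by rw [hk]; exact hαjl)
    · exact (hVt _ _).2 ((hotherl k hk).1)
  have hV : admissible α V := by
    intro i k
    by_cases hk : k = j
    · rw [hk]
      have h2 := hVt i.castSucc j.castSucc
      rw [hαj i] at h2
      exact h2
    · have h2 := hVt i.castSucc k.castSucc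
      rw [(hother i k hk).1] at h2
      exact h2
  -- entries of Mt
  have entry : ∀ a b, Mt a b = -∑ k : Fin (ν + 1), Gt a k * Vt k b := by
    intro a b; rw [hMt]; simp [Matrix.mul_apply]
  have hcorner : Mt (Fin.last n) (Fin.last n) = Vt (Fin.last ν) (Fin.last n) := by
    rw [entry, Fin.sum_univ_castSucc]
    simp [hVt_lastcol, hGt_corner]
  have hcol : ∀ i : Fin n,
      Mt i.castSucc (Fin.last n) = (-(β i j : ℝ)) * Vt (Fin.last ν) (Fin.last n) := by
    intro i
    rw [entry, Fin.sum_univ_castSucc]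
    simp [hVt_lastcol, hGt_lastcol i]
  have hrowlast : ∀ i' : Fin n,
      Mt (Fin.last n) i'.castSucc = -Vt j.castSucc i'.castSucc := by
    intro i'
    rw [entry, Fin.sum_univ_castSucc]
    have hsum : ∑ k : Fin ν, Gt (Fin.last n) k.castSucc * Vt k.castSucc i'.castSucc
        = Vt j.castSucc i'.castSucc := by
      rw [Finset.sum_eq_single j]
      · rw [hGt_lastrow_j, one_mul]
      · intro k _ hk; rw [hGt_lastrow_main k hk, zero_mul]
      · intro h; exact absurd (Finset.mem_univ j) h
    rw [hsum, hVt_lastrow i']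
    ring
  have hmain : ∀ i i' : Fin n,
      Mt i.castSucc i'.castSucc = P i i' + (-(β i j : ℝ)) * Mt (Fin.last n) i'.castSucc := by
    intro i i'
    rw [hrowlast i', entry, Fin.sum_univ_castSucc, hVt_lastrow i']
    have hPe : P i i' = -(∑ k : Fin ν, G i k * Vt k.castSucc i'.castSucc) := by
      rw [hP]; simp [Matrix.mul_apply, hVdef]
      rfl
    rw [hPe]
    have hterm : ∀ k : Fin ν, Gt i.castSucc k.castSucc * Vt k.castSucc i'.castSucc
        = G i k * Vt k.castSucc i'.castSucc
          - (if k = j then (β i j : ℝ) * Vt j.castSucc i'.castSucc else 0) := by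
      intro k
      by_cases hk : k = j
      · rw [hk, if_pos rfl, hGt_j i, hG]
        show -(α i j : ℝ) * _ = gam α β i j * _ - _
        simp only [gam]
        ring
      · rw [if_neg hk, hGt_main i k hk, sub_zero]
    rw [Finset.sum_congr rfl (fun k _ => hterm k), Finset.sum_sub_distrib,
      Finset.sum_ite_eq' Finset.univ j, if_pos (Finset.mem_univ j)]
    ring
  -- a positive principal minor of P of size rank G
  have hND' := hND V hV
  rw [show sumMinors G.rank (-(gam α β * V)) = ∑ I ∈ Finset.univ.powersetCard G.rank,
    principalMinor P I from rfl] at hND'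
  obtain ⟨I, hImem, hIne⟩ := Finset.exists_ne_zero_of_sum_ne_zero hND'
  have hIcard : I.card = G.rank := Finset.mem_powersetCard_univ.mp hImem
  have hIpos : 0 < principalMinor P I := lt_of_le_of_ne (hP0 V hV I) (Ne.symm hIne)
  set S : Finset (Fin (n + 1)) := insert (Fin.last n) (I.map Fin.castSuccEmb) with hSdef
  have hlast_notmem : Fin.last n ∉ I.map Fin.castSuccEmb := by
    intro h
    obtain ⟨i, -, hi⟩ := Finset.mem_map.mp h
    exact (Fin.castSucc_lt_last i).ne hi
  have hScard : S.card = G.rank + 1 := by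
    rw [hSdef, Finset.card_insert_of_notMem hlast_notmem, Finset.card_map, hIcard]
  have hminor : principalMinor Mt S = Vt (Fin.last ν) (Fin.last n) * principalMinor P I :=
    minor_insert_last Mt P (fun i => -(β i j : ℝ)) _ hcorner hcol hmain I
  have hpos : 0 < principalMinor Mt S := by
    rw [hminor]; exact mul_pos hv hIpos
  -- rank Gt = rank G + 1
  have hge : G.rank + 1 ≤ Gt.rank := by
    have h1 : S.card ≤ Mt.rank := card_le_rank_of_minor_ne Mt S (ne_of_gt hpos)
    have h2 : Mt.rank ≤ Gt.rank := by
      have hMt2 : Mt = Gt * (-Vt) := by rw [hMt, Matrix.mul_neg]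
      rw [hMt2]
      exact Matrix.rank_mul_le_left _ _
    rw [hScard] at h1
    exact h1.trans h2
  set w : Fin (n + 1) → ℝ := Fin.snoc (fun i => (β i j : ℝ)) (-1) with hw
  have hwne : w ≠ 0 := by
    intro h
    have := congrFun h (Fin.last n)
    simp [hw, Fin.snoc_last] at this
  have hcols : ∀ k : Fin (ν + 1), ∃ c : ℝ,
      (fun i => Gt i k) - c • w ∈ Submodule.map (extL n) (Submodule.span ℝ (Set.range Gᵀ)) := by
    intro k
    induction k using Fin.lastCases with
    | last =>
      refine ⟨1, ?_⟩
      have : (fun i => Gt i (Fin.last ν)) - (1 : ℝ) • w = 0 := by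
        funext i
        induction i using Fin.lastCases with
        | last => simp [hw, hGt_corner]
        | cast i => simp [hw, hGt_lastcol i]
      rw [this]
      exact Submodule.zero_mem _
    | cast k =>
      by_cases hk : k = j
      · rw [hk]
        refine ⟨-1, Submodule.mem_map.mpr ⟨Gᵀ j, Submodule.subset_span ⟨j, rfl⟩, ?_⟩⟩
        funext i
        induction i using Fin.lastCases with
        | last => simp [hw, extL, hGt_lastrow_j]
        | cast i =>
          simp [hw, extL, hGt_j i, hG, gam, Matrix.transpose]
          ring
      · refine ⟨0, Submodule.mem_map.mpr ⟨Gᵀ k, Submodule.subset_span ⟨k, rfl⟩, ?_⟩⟩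
        funext i
        induction i using Fin.lastCases with
        | last => simp [extL, hGt_lastrow_main k hk]
        | cast i => simp [extL, hGt_main i k hk, Matrix.transpose]
  have hle : Gt.rank ≤ G.rank + 1 := rank_tilde_le G Gt w hwne hcols
  have hrank : Gt.rank = G.rank + 1 := le_antisymm hle hge
  -- conclusion
  have hSmem : S ∈ Finset.univ.powersetCard (G.rank + 1) :=
    Finset.mem_powersetCard_univ.mpr hScard
  have hlesum : principalMinor Mt S ≤ sumMinors (G.rank + 1) Mt := by
    rw [show sumMinors (G.rank + 1) Mt = ∑ T ∈ Finset.univ.powersetCard (G.rank + 1),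
      principalMinor Mt T from rfl]
    exact Finset.single_le_sum (fun T _ => hP0t Vt hVt T) hSmem
  rw [hrank]
  exact (lt_of_lt_of_le hpos hlesum).ne'
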